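/- Consider the pebble collection gadget: d source nodes u_1, …, u_d and a chain v_1, …, v_ℓ where v_1 has an in-edge from u_1 and, for each 2 ≤ i ≤ ℓ, node v_i has in-edges from v_{i−1} and from u_{((i−1) mod d)+1}. If a valid PRBP pebbling strategy never has at least d+2 red pebbles simultaneously on the nodes of this gadget, then its I/O cost is at least ℓ/(2d). -/

import Mathlib

open scoped Classical

/-! ### Directed graphs / DAGs -/

structure DirGraph (V : Type) where
  E : V → V → Prop

namespace DirGraph

variable {V : Type}

def Acyclic (G : DirGraph V) : Prop := ∀ v, ¬ Relation.TransGen G.E v v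

def IsSource (G : DirGraph V) (v : V) : Prop := ∀ u, ¬ G.E u v

def IsSink (G : DirGraph V) (v : V) : Prop := ∀ u, ¬ G.E v u

def NoIsolated (G : DirGraph V) : Prop := ∀ v, (∃ u, G.E u v) ∨ (∃ u, G.E v u)

noncomputable def inDeg (G : DirGraph V) (v : V) : ℕ := {u | G.E u v}.ncard

noncomputable def outDeg (G : DirGraph V) (v : V) : ℕ := {u | G.E v u}.ncard

noncomputable def maxInDeg (G : DirGraph V) [Fintype V] : ℕ :=
  Finset.univ.sup G.inDeg

noncomputable def maxOutDeg (G : DirGraph V) [Fintype V] : ℕ :=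
  Finset.univ.sup G.outDeg

end DirGraph

/-! ### The (one-shot) red-blue pebble game (RBP) -/

structure RBPState (V : Type) where
  red : Finset V
  blue : Finset V
  computed : Finset V

inductive RBPMove (V : Type) where
  | save : V → RBPMove V
  | load : V → RBPMove V
  | compute : V → RBPMove V
  | delete : V → RBPMove V

def RBPMove.ioCost {V : Type} : RBPMove V → ℕ
  | .save _ => 1
  | .load _ => 1
  | _ => 0

variable {V : Type} [Fintype V] [DecidableEq V]

def RBPStep (G : DirGraph V) (r : ℕ) (s : RBPState V) :
    RBPMove V → RBPState V → Prop
  | .save v, t => v ∈ s.red ∧ t = { s with blue := insert v s.blue }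
  | .load v, t => v ∈ s.blue ∧ (insert v s.red).card ≤ r ∧
      t = { s with red := insert v s.red }
  | .compute v, t => ¬ G.IsSource v ∧ v ∉ s.computed ∧
      (∀ u, G.E u v → u ∈ s.red) ∧ (insert v s.red).card ≤ r ∧
      t = { s with red := insert v s.red, computed := insert v s.computed }
  | .delete v, t => v ∈ s.red ∧ t = { s with red := s.red.erase v }

inductive RBPReaches (G : DirGraph V) (r : ℕ) :
    RBPState V → List (RBPMove V) → RBPState V → Prop
  | nil (s : RBPState V) : RBPReaches G r s [] s
  | cons {s t u : RBPState V} {m : RBPMove V} {L : List (RBPMove V)} :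
      RBPStep G r s m t → RBPReaches G r t L u → RBPReaches G r s (m :: L) u

noncomputable def RBPInit (G : DirGraph V) : RBPState V :=
  ⟨∅, Finset.univ.filter (fun v => G.IsSource v), ∅⟩

def RBPValid (G : DirGraph V) (r : ℕ) (L : List (RBPMove V)) : Prop :=
  ∃ t, RBPReaches G r (RBPInit G) L t ∧ ∀ v, G.IsSink v → v ∈ t.blue

def RBPCost {V : Type} (L : List (RBPMove V)) : ℕ := (L.map RBPMove.ioCost).sum

noncomputable def optRBP (G : DirGraph V) (r : ℕ) : ℕ∞ :=
  sInf ((fun L => (RBPCost L : ℕ∞)) '' {L | RBPValid G r L})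

/-! ### The partial-computing red-blue pebble game (PRBP) -/

structure PRBPState (V : Type) where
  lred : Finset V
  dred : Finset V
  blue : Finset V
  marked : Finset (V × V)

def PRBPState.red (s : PRBPState V) : Finset V := s.lred ∪ s.dred

inductive PRBPMove (V : Type) where
  | save : V → PRBPMove V
  | load : V → PRBPMove V
  | pcompute : V → V → PRBPMove V
  | delete : V → PRBPMove V

def PRBPMove.ioCost {V : Type} : PRBPMove V → ℕ
  | .save _ => 1
  | .load _ => 1
  | _ => 0

def PRBPStep (G : DirGraph V) (r : ℕ) (s : PRBPState V) :
    PRBPMove V → PRBPState V → Prop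
  | .save v, t => v ∈ s.dred ∧
      t = { s with lred := insert v s.lred, dred := s.dred.erase v,
                   blue := insert v s.blue }
  | .load v, t => v ∈ s.blue ∧ ((insert v s.lred) ∪ s.dred).card ≤ r ∧
      t = { s with lred := insert v s.lred }
  | .pcompute u v, t => G.E u v ∧ (u, v) ∉ s.marked ∧
      (∀ w, G.E w u → (w, u) ∈ s.marked) ∧ u ∈ s.red ∧
      (v ∈ s.red ∨ (v ∉ s.red ∧ v ∉ s.blue)) ∧
      ((s.lred.erase v) ∪ (insert v s.dred)).card ≤ r ∧
      t = { s with lred := s.lred.erase v, dred := insert v s.dred,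
                   blue := s.blue.erase v, marked := insert (u, v) s.marked }
  | .delete v, t =>
      (v ∈ s.lred ∧ t = { s with lred := s.lred.erase v }) ∨
      (v ∈ s.dred ∧ (∀ w, G.E v w → (v, w) ∈ s.marked) ∧
        t = { s with dred := s.dred.erase v })

inductive PRBPReaches (G : DirGraph V) (r : ℕ) :
    PRBPState V → List (PRBPMove V) → PRBPState V → Prop
  | nil (s : PRBPState V) : PRBPReaches G r s [] s
  | cons {s t u : PRBPState V} {m : PRBPMove V} {L : List (PRBPMove V)} :
      PRBPStep G r s m t → PRBPReaches G r t L u → PRBPReaches G r s (m :: L) u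

noncomputable def PRBPInit (G : DirGraph V) : PRBPState V :=
  ⟨∅, ∅, Finset.univ.filter (fun v => G.IsSource v), ∅⟩

def PRBPValid (G : DirGraph V) (r : ℕ) (L : List (PRBPMove V)) : Prop :=
  ∃ t, PRBPReaches G r (PRBPInit G) L t ∧ (∀ v, G.IsSink v → v ∈ t.blue) ∧
    ∀ u v, G.E u v → (u, v) ∈ t.marked

def PRBPCost {V : Type} (L : List (PRBPMove V)) : ℕ := (L.map PRBPMove.ioCost).sum

noncomputable def optPRBP (G : DirGraph V) (r : ℕ) : ℕ∞ :=
  sInf ((fun L => (PRBPCost L : ℕ∞)) '' {L | PRBPValid G r L})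

/-- `s` is a state reached by some prefix of the pebbling `L`. -/
def PRBPPrefixState (G : DirGraph V) (r : ℕ) (L : List (PRBPMove V))
    (s : PRBPState V) : Prop :=
  ∃ L₁ L₂, L = L₁ ++ L₂ ∧ PRBPReaches G r (PRBPInit G) L₁ s

/-! ### Paths, dominators, S-partitions -/

/-- A directed path in `G` starting at a source node. -/
def IsSourcePath (G : DirGraph V) (p : List V) : Prop :=
  p ≠ [] ∧ p.Chain' G.E ∧ ∀ h : p ≠ [], G.IsSource (p.head h)

/-- `D` is a dominator for the node set `V₀`. -/
def Dominates (G : DirGraph V) (D : Set V) (V₀ : Set V) : Prop :=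
  ∀ p : List V, IsSourcePath G p → ∀ h : p ≠ [], p.getLast h ∈ V₀ →
    ∃ d ∈ D, d ∈ p

/-- The path `p` contains an edge of `E₀` (two consecutive nodes forming it). -/
def PathContainsEdge (p : List V) (E₀ : Set (V × V)) : Prop :=
  ∃ u v, (u, v) ∈ E₀ ∧ [u, v] <:+: p

/-- `D` is an edge-dominator for the edge set `E₀`. -/
def EdgeDominates (G : DirGraph V) (D : Set V) (E₀ : Set (V × V)) : Prop :=
  ∀ p : List V, IsSourcePath G p → PathContainsEdge p E₀ → ∃ d ∈ D, d ∈ p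

/-- The terminal set of a node set `V₀`: nodes of `V₀` with no out-neighbor in `V₀`. -/
def terminalSet (G : DirGraph V) (V₀ : Set V) : Set V :=
  {v | v ∈ V₀ ∧ ∀ w, G.E v w → w ∉ V₀}

/-- The edge-terminal set of an edge set `E₀`. -/
def edgeTerminalSet (E₀ : Set (V × V)) : Set V :=
  {v | (∃ u, (u, v) ∈ E₀) ∧ ∀ w, (v, w) ∉ E₀}

/-- An `S`-partition of the DAG `G` (Hong–Kung). -/
def IsSPartition (G : DirGraph V) (S : ℕ) (k : ℕ) (P : Fin k → Set V) : Prop :=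
  (∀ v : V, ∃! i, v ∈ P i) ∧
  (∀ i j : Fin k, j < i → ∀ u v, u ∈ P i → v ∈ P j → ¬ G.E u v) ∧
  (∀ i, ∃ D : Set V, D.ncard ≤ S ∧ Dominates G D (P i)) ∧
  (∀ i, (terminalSet G (P i)).ncard ≤ S)

/-- An `S`-dominator partition of the DAG `G`: an `S`-partition without the
terminal-set condition. -/
def IsSDomPartition (G : DirGraph V) (S : ℕ) (k : ℕ) (P : Fin k → Set V) : Prop :=
  (∀ v : V, ∃! i, v ∈ P i) ∧
  (∀ i j : Fin k, j < i → ∀ u v, u ∈ P i → v ∈ P j → ¬ G.E u v) ∧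
  (∀ i, ∃ D : Set V, D.ncard ≤ S ∧ Dominates G D (P i))

/-- An `S`-edge partition of the DAG `G`. -/
def IsSEdgePartition (G : DirGraph V) (S : ℕ) (k : ℕ)
    (P : Fin k → Set (V × V)) : Prop :=
  (∀ i, P i ⊆ {e | G.E e.1 e.2}) ∧
  (∀ u v, G.E u v → ∃! i, (u, v) ∈ P i) ∧
  (∀ i j : Fin k, i < j → ∀ u v w, G.E u v → G.E v w →
      ¬ ((v, w) ∈ P i ∧ (u, v) ∈ P j)) ∧
  (∀ i, ∃ D : Set V, D.ncard ≤ S ∧ EdgeDominates G D (P i)) ∧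
  (∀ i, (edgeTerminalSet (P i)).ncard ≤ S)

noncomputable def minEdgePartition (G : DirGraph V) (S : ℕ) : ℕ :=
  sInf {k | ∃ P : Fin k → Set (V × V), IsSEdgePartition G S k P}

noncomputable def minDomPartition (G : DirGraph V) (S : ℕ) : ℕ :=
  sInf {k | ∃ P : Fin k → Set V, IsSDomPartition G S k P}

noncomputable def minSPartition (G : DirGraph V) (S : ℕ) : ℕ :=
  sInf {k | ∃ P : Fin k → Set V, IsSPartition G S k P}
/-- The pebble collection gadget: sources `u_0, …, u_{d-1}` (as `Sum.inl`) and a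
chain `v_0, …, v_{ℓ-1}` (as `Sum.inr`), where `v_k` has in-edges from
`v_{k-1}` (for `k ≥ 1`) and from `u_{k mod d}`. -/
def CollG (d ℓ : ℕ) : DirGraph (Fin d ⊕ Fin ℓ) :=
  ⟨fun a b =>
    match a, b with
    | Sum.inl j, Sum.inr k => (j : ℕ) = (k : ℕ) % d
    | Sum.inr k, Sum.inr k' => (k : ℕ) + 1 = (k' : ℕ)
    | _, _ => False⟩

/-! ### Auxiliary development for the collection gadget lower bound -/

section AuxDev

variable {V : Type} [Fintype V] [DecidableEq V] {G : DirGraph V} {r : ℕ}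

lemma PRBPState.dred_subset_red (s : PRBPState V) : s.dred ⊆ s.red :=
  Finset.subset_union_right

lemma exists_flip {P : ℕ → Prop} {j k : ℕ} (hjk : j ≤ k) (h1 : ¬ P j) (h2 : P k) :
    ∃ i, j ≤ i ∧ i < k ∧ ¬ P i ∧ P (i + 1) := by
  induction k with
  | zero =>
    obtain rfl : j = 0 := Nat.le_zero.mp hjk
    exact absurd h2 h1
  | succ k ih =>
    have hjk' : j ≤ k := by
      rcases Nat.lt_or_ge j (k+1) with h | h
      · omega
      · exact absurd (by omega : j = k + 1) (fun e => h1 (e ▸ h2))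
    by_cases hk : P k
    · obtain ⟨i, hi1, hi2, hi3, hi4⟩ := ih hjk' hk
      exact ⟨i, hi1, by omega, hi3, hi4⟩
    · exact ⟨k, hjk', Nat.lt_succ_self _, hk, h2⟩

lemma step_marked_mono {s t : PRBPState V} {m : PRBPMove V}
    (h : PRBPStep G r s m t) : s.marked ⊆ t.marked := by
  cases m with
  | save v => obtain ⟨-, rfl⟩ := h; exact Finset.Subset.refl _
  | load v => obtain ⟨-, -, rfl⟩ := h; exact Finset.Subset.refl _
  | pcompute u v =>
    obtain ⟨-, -, -, -, -, -, rfl⟩ := h; exact Finset.subset_insert _ _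
  | delete v =>
    rcases h with ⟨-, rfl⟩ | ⟨-, -, rfl⟩ <;> exact Finset.Subset.refl _

lemma step_marked_new {s t : PRBPState V} {m : PRBPMove V} {u v : V}
    (h : PRBPStep G r s m t) (hm : (u, v) ∈ t.marked) :
    (u, v) ∈ s.marked ∨ m = .pcompute u v := by
  cases m with
  | save w => obtain ⟨-, rfl⟩ := h; exact Or.inl hm
  | load w => obtain ⟨-, -, rfl⟩ := h; exact Or.inl hm
  | pcompute a b =>
    obtain ⟨-, -, -, -, -, -, rfl⟩ := h
    rcases Finset.mem_insert.mp hm with he | hm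
    · right
      obtain ⟨h1, h2⟩ := Prod.mk.injEq .. ▸ he
      rw [h1, h2]
    · exact Or.inl hm
  | delete w =>
    rcases h with ⟨-, rfl⟩ | ⟨-, -, rfl⟩ <;> exact Or.inl hm

lemma step_pcompute {s t : PRBPState V} {u v : V}
    (h : PRBPStep G r s (.pcompute u v) t) :
    G.E u v ∧ (u, v) ∉ s.marked ∧ (∀ w, G.E w u → (w, u) ∈ s.marked) ∧
      u ∈ s.red ∧ (u, v) ∈ t.marked ∧ (u ≠ v → u ∈ t.red) ∧ v ∈ t.dred := by
  obtain ⟨hE, hnm, hin, hured, -, -, rfl⟩ := h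
  refine ⟨hE, hnm, hin, hured, Finset.mem_insert_self _ _, fun hne => ?_, Finset.mem_insert_self _ _⟩
  rcases Finset.mem_union.mp hured with h | h
  · exact Finset.mem_union.mpr (Or.inl (Finset.mem_erase.mpr ⟨hne, h⟩))
  · exact Finset.mem_union.mpr (Or.inr (Finset.mem_insert_of_mem h))

lemma step_red_new {s t : PRBPState V} {m : PRBPMove V} {v : V}
    (h : PRBPStep G r s m t) (hv : v ∈ t.red) :
    v ∈ s.red ∨ m = .load v ∨ ∃ u, m = .pcompute u v := by
  cases m with
  | save w =>
    obtain ⟨hw, rfl⟩ := h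
    left
    rcases Finset.mem_union.mp hv with h | h
    · rcases Finset.mem_insert.mp h with rfl | h
      · exact Finset.mem_union.mpr (Or.inr hw)
      · exact Finset.mem_union.mpr (Or.inl h)
    · exact Finset.mem_union.mpr (Or.inr (Finset.mem_of_mem_erase h))
  | load w =>
    obtain ⟨-, -, rfl⟩ := h
    rcases Finset.mem_union.mp hv with h | h
    · rcases Finset.mem_insert.mp h with rfl | h
      · exact Or.inr (Or.inl rfl)
      · exact Or.inl (Finset.mem_union.mpr (Or.inl h))
    · exact Or.inl (Finset.mem_union.mpr (Or.inr h))
  | pcompute a b =>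
    obtain ⟨-, -, -, -, -, -, rfl⟩ := h
    rcases Finset.mem_union.mp hv with h | h
    · exact Or.inl (Finset.mem_union.mpr (Or.inl (Finset.mem_of_mem_erase h)))
    · rcases Finset.mem_insert.mp h with rfl | h
      · exact Or.inr (Or.inr ⟨a, rfl⟩)
      · exact Or.inl (Finset.mem_union.mpr (Or.inr h))
  | delete w =>
    rcases h with ⟨-, rfl⟩ | ⟨-, -, rfl⟩ <;> left
    · rcases Finset.mem_union.mp hv with h | h
      · exact Finset.mem_union.mpr (Or.inl (Finset.mem_of_mem_erase h))
      · exact Finset.mem_union.mpr (Or.inr h)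
    · rcases Finset.mem_union.mp hv with h | h
      · exact Finset.mem_union.mpr (Or.inl h)
      · exact Finset.mem_union.mpr (Or.inr (Finset.mem_of_mem_erase h))

lemma step_dred_gone {s t : PRBPState V} {m : PRBPMove V} {v : V}
    (h : PRBPStep G r s m t) (hv : v ∈ s.dred) (hv' : v ∉ t.dred) :
    m = .save v ∨ (m = .delete v ∧ ∀ w, G.E v w → (v, w) ∈ s.marked) := by
  cases m with
  | save w =>
    obtain ⟨-, rfl⟩ := h
    by_cases hw : v = w
    · exact Or.inl (by rw [hw])
    · exact absurd (Finset.mem_erase.mpr ⟨hw, hv⟩) hv'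
  | load w => obtain ⟨-, -, rfl⟩ := h; exact absurd hv hv'
  | pcompute a b =>
    obtain ⟨-, -, -, -, -, -, rfl⟩ := h
    exact absurd (Finset.mem_insert_of_mem hv) hv'
  | delete w =>
    rcases h with ⟨-, rfl⟩ | ⟨hw, hout, rfl⟩
    · exact absurd hv hv'
    · by_cases hvw : v = w
      · subst hvw; exact Or.inr ⟨rfl, hout⟩
      · exact absurd (Finset.mem_erase.mpr ⟨hvw, hv⟩) hv'

lemma step_blue_new {s t : PRBPState V} {m : PRBPMove V} {v : V}
    (h : PRBPStep G r s m t) (hv : v ∈ t.blue) :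
    v ∈ s.blue ∨ m = .save v := by
  cases m with
  | save w =>
    obtain ⟨-, rfl⟩ := h
    rcases Finset.mem_insert.mp hv with rfl | h
    · exact Or.inr rfl
    · exact Or.inl h
  | load w => obtain ⟨-, -, rfl⟩ := h; exact Or.inl hv
  | pcompute a b =>
    obtain ⟨-, -, -, -, -, -, rfl⟩ := h
    exact Or.inl (Finset.mem_of_mem_erase hv)
  | delete w =>
    rcases h with ⟨-, rfl⟩ | ⟨-, -, rfl⟩ <;> exact Or.inl hv

lemma exists_trace {s0 sF : PRBPState V} {L : List (PRBPMove V)}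
    (h : PRBPReaches G r s0 L sF) :
    ∃ f : ℕ → PRBPState V, f 0 = s0 ∧ (∀ k, L.length ≤ k → f k = sF) ∧
      (∀ k (hk : k < L.length), PRBPStep G r (f k) (L.get ⟨k, hk⟩) (f (k + 1))) ∧
      (∀ k, PRBPReaches G r s0 (L.take k) (f k)) := by
  induction h with
  | nil s =>
    exact ⟨fun _ => s, rfl, fun _ _ => rfl, fun k hk => absurd hk (by simp),
      fun k => by simp [PRBPReaches.nil]⟩
  | @cons s t u m L hst hrest ih =>
    obtain ⟨f, hf0, hfF, hstep, hpre⟩ := ih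
    refine ⟨fun k => Nat.casesOn k s f, rfl, ?_, ?_, ?_⟩
    · intro k hk
      simp only [List.length_cons] at hk
      obtain ⟨k', rfl⟩ : ∃ k', k = k' + 1 := ⟨k - 1, by omega⟩
      exact hfF k' (by omega)
    · intro k hk
      cases k with
      | zero => simpa [hf0] using hst
      | succ k =>
        simp only [List.length_cons] at hk
        exact hstep k (by omega)
    · intro k
      cases k with
      | zero => exact PRBPReaches.nil s
      | succ k => exact PRBPReaches.cons hst (hpre k)

end AuxDev

section CollDev

set_option linter.unusedSectionVars false

variable {d ℓ r : ℕ}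

lemma collE_ne {a b : Fin d ⊕ Fin ℓ} (h : (CollG d ℓ).E a b) : a ≠ b := by
  cases a <;> cases b <;> simp [CollG] at h ⊢
  omega

lemma collE_not_inl {a : Fin d ⊕ Fin ℓ} {j : Fin d} : ¬ (CollG d ℓ).E a (Sum.inl j) := by
  cases a <;> simp [CollG]

lemma collE_se (hd : 1 ≤ d) {k : ℕ} (h2 : k < ℓ) :
    (CollG d ℓ).E (Sum.inl ⟨k % d, Nat.mod_lt _ hd⟩) (Sum.inr ⟨k, h2⟩) := by
  simp [CollG]

lemma collE_ce {k : ℕ} (h1 : 1 ≤ k) (h2 : k < ℓ) :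
    (CollG d ℓ).E (Sum.inr ⟨k - 1, by omega⟩) (Sum.inr ⟨k, h2⟩) := by
  simp [CollG]; omega

lemma coll_inr_not_source (hd : 1 ≤ d) (k : Fin ℓ) :
    ¬ (CollG d ℓ).IsSource (Sum.inr k) := by
  intro h
  exact h _ (collE_se hd k.isLt)

lemma coll_sink (hℓ : 0 < ℓ) : (CollG d ℓ).IsSink (Sum.inr ⟨ℓ - 1, by omega⟩) := by
  intro u h
  cases u with
  | inl j => exact h
  | inr k => simp [CollG] at h; omega

/-- Bundled data of a valid run of the gadget with few red pebbles. -/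
structure CSetup (d ℓ r : ℕ) : Type where
  L : List (PRBPMove (Fin d ⊕ Fin ℓ))
  sF : PRBPState (Fin d ⊕ Fin ℓ)
  f : ℕ → PRBPState (Fin d ⊕ Fin ℓ)
  hd : 1 ≤ d
  f0 : f 0 = PRBPInit (CollG d ℓ)
  ffin : ∀ k, L.length ≤ k → f k = sF
  fstep : ∀ k (hk : k < L.length), PRBPStep (CollG d ℓ) r (f k) (L.get ⟨k, hk⟩) (f (k + 1))
  hsink : ∀ v, (CollG d ℓ).IsSink v → v ∈ sF.blue
  hmark : ∀ u v, (CollG d ℓ).E u v → (u, v) ∈ sF.marked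
  hfew : ∀ k, (f k).red.card < d + 2

namespace CSetup

variable (S : CSetup d ℓ r)

lemma marked_mono_succ (k : ℕ) : (S.f k).marked ⊆ (S.f (k + 1)).marked := by
  by_cases hk : k < S.L.length
  · exact step_marked_mono (S.fstep k hk)
  · rw [S.ffin k (by omega), S.ffin (k+1) (by omega)]

lemma marked_mono {j k : ℕ} (h : j ≤ k) : (S.f j).marked ⊆ (S.f k).marked := by
  induction k with
  | zero =>
    obtain rfl : j = 0 := Nat.le_zero.mp h
    exact Finset.Subset.refl _
  | succ k ih =>
    rcases Nat.lt_or_ge j (k+1) with h' | h'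
    · exact (ih (by omega)).trans (S.marked_mono_succ k)
    · obtain rfl : j = k + 1 := by omega
      exact Finset.Subset.refl _

lemma init_marked : (S.f 0).marked = ∅ := by rw [S.f0]; rfl

/-- For each edge there is a step where it gets marked. -/
lemma mt_exists {u v : Fin d ⊕ Fin ℓ} (hE : (CollG d ℓ).E u v) :
    ∃ j, (∃ hj : j < S.L.length, S.L.get ⟨j, hj⟩ = .pcompute u v) ∧
      (u, v) ∉ (S.f j).marked := by
  have h0 : (u, v) ∉ (S.f 0).marked := by rw [S.init_marked]; exact Finset.notMem_empty _
  have hF : (u, v) ∈ (S.f S.L.length).marked := by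
    rw [S.ffin _ le_rfl]; exact S.hmark u v hE
  obtain ⟨i, -, hi2, hi3, hi4⟩ := exists_flip (P := fun k => (u, v) ∈ (S.f k).marked) (Nat.zero_le _) h0 hF
  rcases step_marked_new (S.fstep i hi2) hi4 with h | h
  · exact absurd h hi3
  · exact ⟨i, ⟨hi2, h⟩, hi3⟩

/-- The marking time of an edge. -/
noncomputable def mt (u v : Fin d ⊕ Fin ℓ) : ℕ :=
  if h : ∃ j, (∃ hj : j < S.L.length, S.L.get ⟨j, hj⟩ = .pcompute u v) ∧
      (u, v) ∉ (S.f j).marked then h.choose else 0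

lemma mt_spec {u v : Fin d ⊕ Fin ℓ} (hE : (CollG d ℓ).E u v) :
    (∃ hj : S.mt u v < S.L.length, S.L.get ⟨S.mt u v, hj⟩ = .pcompute u v) ∧
      (u, v) ∉ (S.f (S.mt u v)).marked := by
  rw [mt, dif_pos (S.mt_exists hE)]
  exact (S.mt_exists hE).choose_spec

lemma mt_lt {u v : Fin d ⊕ Fin ℓ} (hE : (CollG d ℓ).E u v) :
    S.mt u v < S.L.length := (S.mt_spec hE).1.choose

lemma mt_move {u v : Fin d ⊕ Fin ℓ} (hE : (CollG d ℓ).E u v) :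
    S.L.get ⟨S.mt u v, S.mt_lt hE⟩ = .pcompute u v := (S.mt_spec hE).1.choose_spec

lemma mt_step {u v : Fin d ⊕ Fin ℓ} (hE : (CollG d ℓ).E u v) :
    PRBPStep (CollG d ℓ) r (S.f (S.mt u v)) (.pcompute u v) (S.f (S.mt u v + 1)) := by
  have := S.fstep (S.mt u v) (S.mt_lt hE)
  rwa [S.mt_move hE] at this

lemma mt_marked_iff {u v : Fin d ⊕ Fin ℓ} (hE : (CollG d ℓ).E u v) (k : ℕ) :
    (u, v) ∈ (S.f k).marked ↔ S.mt u v < k := by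
  constructor
  · intro h
    by_contra hc
    exact (S.mt_spec hE).2 (S.marked_mono (by omega) h)
  · intro h
    have h1 : (u, v) ∈ (S.f (S.mt u v + 1)).marked := (step_pcompute (S.mt_step hE)).2.2.2.2.1
    exact S.marked_mono (by omega) h1

/-- Marking time of the chain edge into `v_k` (total function version). -/
noncomputable def mtc (k : ℕ) : ℕ :=
  if h : 1 ≤ k ∧ k < ℓ then S.mt (Sum.inr ⟨k - 1, by omega⟩) (Sum.inr ⟨k, h.2⟩) else 0

lemma mtc_eq {k : ℕ} (h1 : 1 ≤ k) (h2 : k < ℓ) :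
    S.mtc k = S.mt (Sum.inr ⟨k - 1, by omega⟩) (Sum.inr ⟨k, h2⟩) := dif_pos ⟨h1, h2⟩

/-- In-edges of the source endpoint are marked strictly earlier. -/
lemma in_marked_at_mt {u v w : Fin d ⊕ Fin ℓ} (hE : (CollG d ℓ).E u v)
    (hw : (CollG d ℓ).E w u) : S.mt w u < S.mt u v := by
  have := (step_pcompute (S.mt_step hE)).2.2.1 w hw
  exact (S.mt_marked_iff hw _).mp this

lemma mtc_lt_succ {k : ℕ} (h1 : 1 ≤ k) (h2 : k + 1 < ℓ) : S.mtc k < S.mtc (k + 1) := by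
  rw [S.mtc_eq h1 (by omega), S.mtc_eq (by omega) h2]
  have hE : (CollG d ℓ).E (Sum.inr ⟨k + 1 - 1, by omega⟩) (Sum.inr ⟨k + 1, h2⟩) :=
    collE_ce (by omega) h2
  have hw : (CollG d ℓ).E (Sum.inr ⟨k - 1, by omega⟩) (Sum.inr ⟨k + 1 - 1, by omega⟩) := by
    have h3 := collE_ce (d := d) h1 (show k < ℓ by omega)
    convert h3 using 3
    omega
  exact S.in_marked_at_mt hE hw

lemma mtc_mono {j k : ℕ} (h1 : 1 ≤ j) (hjk : j ≤ k) (h2 : k < ℓ) : S.mtc j ≤ S.mtc k := by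
  induction k with
  | zero => omega
  | succ k ih =>
    rcases Nat.lt_or_ge j (k+1) with h' | h'
    · exact le_of_lt (lt_of_le_of_lt (ih (by omega) (by omega)) (S.mtc_lt_succ (by omega) h2))
    · obtain rfl : j = k + 1 := by omega
      exact le_rfl

lemma mts_lt_mtc {k : ℕ} (h2 : k + 1 < ℓ) :
    S.mt (Sum.inl ⟨k % d, Nat.mod_lt _ S.hd⟩) (Sum.inr ⟨k, by omega⟩) < S.mtc (k + 1) := by
  rw [S.mtc_eq (by omega) h2]
  exact S.in_marked_at_mt (collE_ce (by omega) h2) (by exact collE_se S.hd (by omega))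

end CSetup

end CollDev

section CollDev2

set_option linter.unusedSectionVars false
set_option maxHeartbeats 1000000

variable {d ℓ r : ℕ}

namespace CSetup

variable (S : CSetup d ℓ r)

/-- If a property of the trace changes across step `i`, then `i` is a genuine step. -/
lemma flip_step {P : PRBPState (Fin d ⊕ Fin ℓ) → Prop} {i : ℕ}
    (h1 : ¬ P (S.f i)) (h2 : P (S.f (i + 1))) :
    ∃ hi : i < S.L.length,
      PRBPStep (CollG d ℓ) r (S.f i) (S.L.get ⟨i, hi⟩) (S.f (i + 1)) := by
  have hi : i < S.L.length := by
    by_contra hc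
    rw [S.ffin i (by omega)] at h1
    rw [S.ffin (i + 1) (by omega)] at h2
    exact h1 h2
  exact ⟨hi, S.fstep i hi⟩

/-- A chain node in blue at the end was saved at some point. -/
lemma exists_save_of_blue {p : ℕ} (hp : p < ℓ)
    (hblue : Sum.inr ⟨p, hp⟩ ∈ S.sF.blue) :
    ∃ j, ∃ hj : j < S.L.length,
      S.L.get ⟨j, hj⟩ = .save (Sum.inr ⟨p, hp⟩) := by
  have h0 : Sum.inr ⟨p, hp⟩ ∉ (S.f 0).blue := by
    rw [S.f0]
    intro hmem
    exact coll_inr_not_source S.hd _ ((Finset.mem_filter.mp hmem).2)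
  have hF : Sum.inr ⟨p, hp⟩ ∈ (S.f S.L.length).blue := by
    rw [S.ffin _ le_rfl]; exact hblue
  obtain ⟨i, -, -, hi3, hi4⟩ :=
    exists_flip (P := fun k => Sum.inr ⟨p, hp⟩ ∈ (S.f k).blue) (Nat.zero_le _) h0 hF
  obtain ⟨hi, hstep⟩ := S.flip_step (P := fun s => Sum.inr ⟨p, hp⟩ ∈ s.blue) hi3 hi4
  rcases step_blue_new hstep hi4 with h | h
  · exact absurd h hi3
  · exact ⟨i, hi, h⟩

/-- A source node that becomes red must have been loaded in between. -/
lemma exists_load_of_red {i : Fin d} {j k : ℕ} (hjk : j ≤ k)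
    (h1 : Sum.inl i ∉ (S.f j).red) (h2 : Sum.inl i ∈ (S.f k).red) :
    ∃ x, j ≤ x ∧ x < k ∧ ∃ hx : x < S.L.length,
      S.L.get ⟨x, hx⟩ = .load (Sum.inl i) := by
  obtain ⟨x, hx1, hx2, hx3, hx4⟩ :=
    exists_flip (P := fun m => Sum.inl i ∈ (S.f m).red) hjk h1 h2
  obtain ⟨hx, hstep⟩ := S.flip_step (P := fun s => Sum.inl i ∈ s.red) hx3 hx4
  rcases step_red_new hstep hx4 with h | h | ⟨u, h⟩
  · exact absurd h hx3
  · exact ⟨x, hx1, hx2, hx, h⟩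
  · rw [h] at hstep
    exact absurd (step_pcompute hstep).1 collE_not_inl

/-- A chain node that loses its dark red pebble was saved, or deleted with
its out-edges marked. -/
lemma dred_gone {p : Fin ℓ} {j k : ℕ} (hjk : j ≤ k)
    (h1 : Sum.inr p ∈ (S.f j).dred) (h2 : Sum.inr p ∉ (S.f k).dred) :
    ∃ x, j ≤ x ∧ x < k ∧ ∃ hx : x < S.L.length,
      (S.L.get ⟨x, hx⟩ = .save (Sum.inr p) ∨
        (∀ w, (CollG d ℓ).E (Sum.inr p) w → (Sum.inr p, w) ∈ (S.f x).marked)) := by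
  obtain ⟨x, hx1, hx2, hx3, hx4⟩ :=
    exists_flip (P := fun m => Sum.inr p ∉ (S.f m).dred) hjk (not_not_intro h1) h2
  obtain ⟨hx, hstep⟩ := S.flip_step (P := fun s => Sum.inr p ∉ s.dred) hx3 hx4
  rcases step_dred_gone hstep (not_not.mp hx3) hx4 with h | ⟨-, h⟩
  · exact ⟨x, hx1, hx2, hx, Or.inl h⟩
  · exact ⟨x, hx1, hx2, hx, Or.inr h⟩

/-- The pigeonhole step. -/
lemma pigeon {R : Finset (Fin d ⊕ Fin ℓ)} (hd : 1 ≤ d) (hcard : R.card ≤ d + 1)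
    (p : ℕ → ℕ) (hp : ∀ i, i < d → p i < ℓ)
    (hpinj : ∀ i j, i < d → j < d → p i = p j → i = j)
    {a b : ℕ} (ha : a < ℓ) (hb : b < ℓ) (hab : a ≠ b)
    (hpa : ∀ i, i < d → p i ≠ a) (hpb : ∀ i, i < d → p i ≠ b)
    (hA : Sum.inr ⟨a, ha⟩ ∈ R) (hB : Sum.inr ⟨b, hb⟩ ∈ R) :
    ∃ i, ∃ hi : i < d, Sum.inl ⟨i, hi⟩ ∉ R ∧ Sum.inr ⟨p i, hp i hi⟩ ∉ R := by
  by_contra hc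
  push_neg at hc
  set R' : Finset (Fin d ⊕ Fin ℓ) :=
    (R.erase (Sum.inr ⟨a, ha⟩)).erase (Sum.inr ⟨b, hb⟩) with hR'
  have hBmem : (Sum.inr ⟨b, hb⟩ : Fin d ⊕ Fin ℓ) ∈ R.erase (Sum.inr ⟨a, ha⟩) :=
    Finset.mem_erase.mpr ⟨by simp [Fin.ext_iff]; omega, hB⟩
  have hcard' : R'.card ≤ d - 1 := by
    rw [hR', Finset.card_erase_of_mem hBmem, Finset.card_erase_of_mem hA]
    omega
  have hmap : ∀ i : Fin d,
      (if Sum.inl i ∈ R then (Sum.inl i : Fin d ⊕ Fin ℓ)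
        else Sum.inr ⟨p i.1, hp i.1 i.2⟩) ∈ R' := by
    intro i
    by_cases hmem : (Sum.inl i : Fin d ⊕ Fin ℓ) ∈ R
    · rw [if_pos hmem, hR']
      exact Finset.mem_erase.mpr ⟨by simp, Finset.mem_erase.mpr ⟨by simp, hmem⟩⟩
    · rw [if_neg hmem, hR']
      have hin : (Sum.inr ⟨p i.1, hp i.1 i.2⟩ : Fin d ⊕ Fin ℓ) ∈ R :=
        hc i.1 i.2 hmem
      refine Finset.mem_erase.mpr ⟨?_, Finset.mem_erase.mpr ⟨?_, hin⟩⟩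
      · simp [Fin.ext_iff]; exact hpb i.1 i.2
      · simp [Fin.ext_iff]; exact hpa i.1 i.2
  have hinj : Function.Injective (fun i : Fin d =>
      if Sum.inl i ∈ R then (Sum.inl i : Fin d ⊕ Fin ℓ)
        else Sum.inr ⟨p i.1, hp i.1 i.2⟩) := by
    intro i j hij
    by_cases h1 : (Sum.inl i : Fin d ⊕ Fin ℓ) ∈ R <;>
      by_cases h2 : (Sum.inl j : Fin d ⊕ Fin ℓ) ∈ R <;>
      simp [h1, h2] at hij
    · exact hij
    · exact Fin.ext (hpinj i.1 j.1 i.2 j.2 hij)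
  have hle := Finset.card_le_card_of_injOn (s := (Finset.univ : Finset (Fin d)))
    (t := R') (fun i : Fin d =>
      if Sum.inl i ∈ R then (Sum.inl i : Fin d ⊕ Fin ℓ) else Sum.inr ⟨p i.1, hp i.1 i.2⟩)
    (fun i _ => hmap i) (hinj.injOn)
  rw [Finset.card_univ, Fintype.card_fin] at hle
  omega

end CSetup

end CollDev2

section CollDev3

set_option linter.unusedSectionVars false
set_option maxHeartbeats 1000000

variable {d ℓ r : ℕ}

namespace CSetup

variable (S : CSetup d ℓ r)

/-- The cost unit charged to segment `t`: a load inside the segment's window,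
or a save of a chain node belonging to the segment. -/
def Charge (t j : ℕ) : Prop :=
  ∃ hj : j < S.L.length,
    ((∃ x, S.L.get ⟨j, hj⟩ = .load x) ∧ S.mtc (2*d*t+1) < j ∧
      (2*d*(t+1)+1 < ℓ → j < S.mtc (2*d*(t+1)+1))) ∨
    (∃ p : ℕ, ∃ hp : p < ℓ, 2*d*t+1 ≤ p ∧ p ≤ 2*d*t+2*d ∧
      S.L.get ⟨j, hj⟩ = .save (Sum.inr ⟨p, hp⟩))

lemma charge_cost {t j : ℕ} (h : S.Charge t j) :
    ∃ hj : j < S.L.length, (S.L.get ⟨j, hj⟩).ioCost = 1 := by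
  obtain ⟨hj, ⟨⟨x, hm⟩, -⟩ | ⟨p, hp, -, -, hm⟩⟩ := h <;> exact ⟨hj, by rw [hm]; rfl⟩

lemma charge_inj {t t' j : ℕ} (htt' : t < t') (hn' : 2*d*(t'+1) ≤ ℓ)
    (h : S.Charge t j) (h' : S.Charge t' j) : False := by
  have hd1 := S.hd
  have e1 : 2*d*(t+1) = 2*d*t + 2*d := by ring
  have e1' : 2*d*(t'+1) = 2*d*t' + 2*d := by ring
  have e2 : 2*d*(t+1) ≤ 2*d*t' := Nat.mul_le_mul_left _ (by omega)
  obtain ⟨hj, hc⟩ := h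
  obtain ⟨hj', hc'⟩ := h'
  rcases hc with ⟨⟨x, hm⟩, hlo, hhi⟩ | ⟨p, hp, hp1, hp2, hm⟩ <;>
    rcases hc' with ⟨⟨x', hm'⟩, hlo', hhi'⟩ | ⟨p', hp', hp1', hp2', hm'⟩
  · -- load / load
    have hguard : 2*d*(t+1)+1 < ℓ := by omega
    have h1 := hhi hguard
    have h2 : S.mtc (2*d*(t+1)+1) ≤ S.mtc (2*d*t'+1) :=
      S.mtc_mono (by omega) (by omega) (by omega)
    omega
  · cases (hm.symm.trans hm')
  · cases (hm.symm.trans hm')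
  · have heq := hm.symm.trans hm'
    simp only [PRBPMove.save.injEq, Sum.inr.injEq, Fin.mk.injEq] at heq
    omega

/-- Main lemma: every segment gets a charge. -/
lemma charge_exists (t : ℕ) (hn : 2*d*(t+1) ≤ ℓ) : ∃ j, S.Charge t j := by
  have hd1 := S.hd
  have hn2 : 2*d*t + 2*d ≤ ℓ := by
    have e1 : 2*d*(t+1) = 2*d*t + 2*d := by ring
    omega
  by_cases hcor : d = 1 ∧ 2*d*t + 2 = ℓ
  · -- corner case: d = 1 and the segment ends the chain; charge the save of the sink
    obtain ⟨hd1', hℓeq⟩ := hcor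
    have hℓpos : 0 < ℓ := by omega
    have hplt : ℓ - 1 < ℓ := by omega
    have hblue : Sum.inr ⟨ℓ-1, hplt⟩ ∈ S.sF.blue := S.hsink _ (coll_sink hℓpos)
    obtain ⟨j, hj, hm⟩ := S.exists_save_of_blue hplt hblue
    exact ⟨j, hj, Or.inr ⟨ℓ-1, hplt, by omega, by omega, hm⟩⟩
  · have hl1 : 2*d*t + 1 < ℓ := by omega
    set a := 2*d*t with ha
    have he1 : 2*d*(t+1) = a + 2*d := by rw [ha]; ring
    have hEce : (CollG d ℓ).E (Sum.inr ⟨a, by omega⟩) (Sum.inr ⟨a+1, hl1⟩) := by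
      simp [CollG]
    set T := S.mt (Sum.inr ⟨a, by omega⟩) (Sum.inr ⟨a+1, hl1⟩) with hT
    have hTmtc : S.mtc (a+1) = T := by
      rw [S.mtc_eq (by omega) hl1]
      rfl
    have hpcT := step_pcompute (S.mt_step hEce)
    have hra : Sum.inr ⟨a, by omega⟩ ∈ (S.f (T+1)).red :=
      hpcT.2.2.2.2.2.1 (collE_ne hEce)
    have hra1 : Sum.inr ⟨a+1, hl1⟩ ∈ (S.f (T+1)).red :=
      PRBPState.dred_subset_red _ hpcT.2.2.2.2.2.2
    have hcard : (S.f (T+1)).red.card ≤ d + 1 := by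
      have := S.hfew (T+1); omega
    set p : ℕ → ℕ := fun i => if d = 1 then a + 2 else a + d + i with hpdef
    have hcor2 : d = 1 → 2*d*t + 2 ≠ ℓ := fun h1 h2 => hcor ⟨h1, h2⟩
    have hplt : ∀ i, i < d → p i < ℓ := by
      intro i hi
      by_cases h1 : d = 1
      · simp only [hpdef, if_pos h1]
        have := hcor2 h1
        omega
      · simp only [hpdef, if_neg h1]
        omega
    have hrange : ∀ i, i < d → a + 2 ≤ p i ∧ p i ≤ a + 2*d := by
      intro i hi
      by_cases h1 : d = 1
      · simp only [hpdef, if_pos h1]; omega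
      · simp only [hpdef, if_neg h1]; omega
    have hpinj : ∀ i j, i < d → j < d → p i = p j → i = j := by
      intro i j hi hj hij
      by_cases h1 : d = 1
      · omega
      · simp only [hpdef, if_neg h1] at hij
        omega
    have hpa : ∀ i, i < d → p i ≠ a := fun i hi => by have := hrange i hi; omega
    have hpa1 : ∀ i, i < d → p i ≠ a + 1 := fun i hi => by have := hrange i hi; omega
    obtain ⟨i, hi, hu, hw⟩ := pigeon hd1 hcard p hplt hpinj
      (show a < ℓ by omega) hl1 (show a ≠ a + 1 by omega) hpa hpa1 hra hra1
    have hmod : p i % d = i := by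
      by_cases h1 : d = 1
      · simp only [hpdef, if_pos h1]
        rw [h1]
        omega
      · simp only [hpdef, if_neg h1, ha]
        rw [show 2*d*t + d + i = i + d*(2*t+1) by ring, Nat.add_mul_mod_self_left]
        exact Nat.mod_eq_of_lt hi
    have hEse : (CollG d ℓ).E (Sum.inl ⟨i, hi⟩) (Sum.inr ⟨p i, hplt i hi⟩) := by
      simp [CollG, hmod]
    set τ := S.mt (Sum.inl ⟨i, hi⟩) (Sum.inr ⟨p i, hplt i hi⟩) with hτ
    rcases lt_trichotomy τ T with hlt | heq | hgt
    · -- Case B: the source edge into `v_{p i}` was marked before T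
      have hwdred : Sum.inr ⟨p i, hplt i hi⟩ ∈ (S.f (τ+1)).dred :=
        (step_pcompute (S.mt_step hEse)).2.2.2.2.2.2
      have hwnd : Sum.inr ⟨p i, hplt i hi⟩ ∉ (S.f (T+1)).dred :=
        fun h => hw (PRBPState.dred_subset_red _ h)
      obtain ⟨x, hx1, hx2, hx, hcase⟩ :=
        S.dred_gone (show τ+1 ≤ T+1 by omega) hwdred hwnd
      rcases hcase with hsave | hdel
      · exact ⟨x, hx, Or.inr ⟨p i, hplt i hi, by have := hrange i hi; omega,
          by have := hrange i hi; omega, hsave⟩⟩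
      · by_cases hnext : p i + 1 < ℓ
        · exfalso
          have hEout : (CollG d ℓ).E (Sum.inr ⟨p i, hplt i hi⟩)
              (Sum.inr ⟨p i + 1, hnext⟩) := by simp [CollG]
          have h1 : S.mt (Sum.inr ⟨p i, hplt i hi⟩) (Sum.inr ⟨p i + 1, hnext⟩) < x :=
            (S.mt_marked_iff hEout x).mp (hdel _ hEout)
          have h2 : S.mtc (p i + 1) =
              S.mt (Sum.inr ⟨p i, hplt i hi⟩) (Sum.inr ⟨p i + 1, hnext⟩) :=
            S.mtc_eq (by omega) hnext
          have h3 : S.mtc (a+1) ≤ S.mtc (p i + 1) :=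
            S.mtc_mono (by omega) (by have := hrange i hi; omega) hnext
          omega
        · -- `v_{p i}` is the sink; charge its save
          have hℓpos : 0 < ℓ := by omega
          have hblue : Sum.inr ⟨ℓ-1, by omega⟩ ∈ S.sF.blue := S.hsink _ (coll_sink hℓpos)
          obtain ⟨j, hj, hm⟩ := S.exists_save_of_blue (by omega) hblue
          have hr := hrange i hi
          exact ⟨j, hj, Or.inr ⟨ℓ-1, by omega, by omega, by omega, hm⟩⟩
    · -- τ = T is impossible: distinct moves
      exfalso
      have hfin : (⟨S.mt (Sum.inl ⟨i, hi⟩) (Sum.inr ⟨p i, hplt i hi⟩), S.mt_lt hEse⟩ :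
          Fin S.L.length) = ⟨S.mt (Sum.inr ⟨a, by omega⟩) (Sum.inr ⟨a+1, hl1⟩), S.mt_lt hEce⟩ :=
        Fin.ext heq
      have hcontra : PRBPMove.pcompute (Sum.inl ⟨i, hi⟩ : Fin d ⊕ Fin ℓ)
          (Sum.inr ⟨p i, hplt i hi⟩) =
          PRBPMove.pcompute (Sum.inr ⟨a, by omega⟩ : Fin d ⊕ Fin ℓ) (Sum.inr ⟨a+1, hl1⟩) := by
        rw [← S.mt_move hEse, ← S.mt_move hEce]
        exact congrArg S.L.get hfin
      simp at hcontra
    · -- Case A: the source edge is marked after T, needing a load of `u_i` in the window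
      have hured : Sum.inl ⟨i, hi⟩ ∈ (S.f τ).red :=
        (step_pcompute (S.mt_step hEse)).2.2.2.1
      obtain ⟨x, hx1, hx2, hx, hm⟩ :=
        S.exists_load_of_red (show T+1 ≤ τ by omega) hu hured
      refine ⟨x, hx, Or.inl ⟨⟨_, hm⟩, ?_, ?_⟩⟩
      · have hTx : S.mtc (2*d*t+1) = T := hTmtc
        omega
      intro hguard
      have hr := hrange i hi
      have hpi1 : p i + 1 < ℓ := by omega
      have h2 : S.mtc (p i + 1) =
          S.mt (Sum.inr ⟨p i, hplt i hi⟩) (Sum.inr ⟨p i + 1, hpi1⟩) :=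
        S.mtc_eq (by omega) hpi1
      have hEout : (CollG d ℓ).E (Sum.inr ⟨p i, hplt i hi⟩)
          (Sum.inr ⟨p i + 1, hpi1⟩) := by simp [CollG]
      have hτlt : τ < S.mtc (p i + 1) := by
        rw [h2]
        exact S.in_marked_at_mt hEout hEse
      have hmono : S.mtc (p i + 1) ≤ S.mtc (2*d*(t+1)+1) :=
        S.mtc_mono (by omega) (by omega) hguard
      omega

end CSetup

lemma cost_eq {V : Type} (L : List (PRBPMove V)) :
    PRBPCost L = ∑ i : Fin L.length, (L.get i).ioCost := by
  induction L with
  | nil => simp [PRBPCost]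
  | cons m M ih =>
    rw [show PRBPCost (m :: M) = m.ioCost + PRBPCost M by simp [PRBPCost]]
    rw [ih]
    simp [Fin.sum_univ_succ]

lemma card_le_cost {V : Type} (L : List (PRBPMove V)) {n : ℕ} (c : ℕ → ℕ)
    (hc : ∀ t, t < n → ∃ h : c t < L.length, (L.get ⟨c t, h⟩).ioCost = 1)
    (hinj : ∀ t t', t < n → t' < n → c t = c t' → t = t') :
    n ≤ PRBPCost L := by
  rw [cost_eq]
  have hg : ∀ t : Fin n, c t.1 < L.length := fun t => (hc t.1 t.2).choose
  set g : Fin n → Fin L.length := fun t => ⟨c t.1, hg t⟩ with hgdef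
  have hginj : Function.Injective g := by
    intro t t' h
    simp only [hgdef, Fin.mk.injEq] at h
    exact Fin.ext (hinj _ _ t.2 t'.2 h)
  calc n = (Finset.univ.image g).card := by
        rw [Finset.card_image_of_injective _ hginj, Finset.card_univ, Fintype.card_fin]
    _ = ∑ _i ∈ Finset.univ.image g, 1 := by rw [Finset.card_eq_sum_ones]
    _ ≤ ∑ i ∈ Finset.univ.image g, (L.get i).ioCost := by
        apply Finset.sum_le_sum
        intro i hi
        obtain ⟨t, -, rfl⟩ := Finset.mem_image.mp hi
        exact (hc t.1 t.2).choose_spec.ge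
    _ ≤ ∑ i : Fin L.length, (L.get i).ioCost :=
        Finset.sum_le_sum_of_subset (Finset.subset_univ _)

end CollDev3
/-- if a valid PRBP pebbling never has at least `d + 2` red pebbles
simultaneously on the gadget, then its I/O cost is at least `ℓ / (2d)`. -/
theorem collection_gadget_cost (d ℓ r : ℕ) (hd : 1 ≤ d)
    (L : List (PRBPMove (Fin d ⊕ Fin ℓ))) (hL : PRBPValid (CollG d ℓ) r L)
    (hfew : ∀ s, PRBPPrefixState (CollG d ℓ) r L s → s.red.card < d + 2) :
    ℓ / (2 * d) ≤ PRBPCost L := by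
  obtain ⟨sF, hre, hs, hm⟩ := hL
  obtain ⟨f, hf0, hfF, hstep, hpre⟩ := exists_trace hre
  set S : CSetup d ℓ r :=
    ⟨L, sF, f, hd, hf0, hfF, hstep, hs, hm,
      fun k => hfew (f k)
        ⟨L.take k, L.drop k, (List.take_append_drop k L).symm, hpre k⟩⟩ with hS
  set n := ℓ / (2*d) with hn
  have hmul : n * (2*d) ≤ ℓ := Nat.div_mul_le_self ℓ (2*d)
  have hseg : ∀ t : ℕ, ∃ j, t < n → S.Charge t j := by
    intro t
    by_cases ht : t < n
    · have h2 : 2*d*(t+1) ≤ ℓ := by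
        have h3 : t + 1 ≤ n := ht
        calc 2*d*(t+1) ≤ 2*d*n := Nat.mul_le_mul_left _ h3
          _ = n * (2*d) := mul_comm _ _
          _ ≤ ℓ := hmul
      exact (S.charge_exists t h2).imp fun j hj _ => hj
    · exact ⟨0, fun h => absurd h ht⟩
  choose c hc using hseg
  refine card_le_cost L (n := n) c (fun t ht => S.charge_cost (hc t ht)) ?_
  intro t t' ht ht' he
  by_contra hne
  have hW : ∀ u u', u < u' → u' < n → c u = c u' → False := by
    intro u u' huu' hu' hcc
    have h2 : 2*d*(u'+1) ≤ ℓ := by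
      have h3 : u' + 1 ≤ n := hu'
      calc 2*d*(u'+1) ≤ 2*d*n := Nat.mul_le_mul_left _ h3
        _ = n * (2*d) := mul_comm _ _
        _ ≤ ℓ := hmul
    exact S.charge_inj huu' h2 (hc u (by omega)) (hcc ▸ hc u' hu')
  rcases lt_trichotomy t t' with h | h | h
  · exact hW t t' h ht' he
  · exact hne h
  · exact hW t' t h ht he.symm
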